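/- arXiv:1503.04406 — 9 statements merged into one kernel-verified Lean document; each statement's English description precedes it below -/
import Mathlib

section
/- Let G be a looped simple graph. For each vertex v, the neighborhood circuit ζ(v) — equal to {χ(v)} ∪ {φ(w) : w ∈ N(v)} if v is unlooped, and {ψ(v)} ∪ {φ(w) : w ∈ N(v)} if v is looped — is a circuit of the isotropic matroid M[IAS(G)], provided v is not isolated. -/
/-- Columns of `IAS(G) = (I | A | A+I)` over GF(2). -/
def iasCol {V : Type} [DecidableEq V] (A : Matrix V V (ZMod 2)) :
    V ⊕ V ⊕ V → V → ZMod 2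
  | Sum.inl v => fun w => if w = v then 1 else 0
  | Sum.inr (Sum.inl v) => fun w => A w v
  | Sum.inr (Sum.inr v) => fun w => A w v + (if w = v then 1 else 0)

/-- A set of ground-set elements is independent when the corresponding columns are
linearly independent over GF(2). -/
def iasIndep {V : Type} [DecidableEq V] (A : Matrix V V (ZMod 2))
    (S : Set (V ⊕ V ⊕ V)) : Prop :=
  LinearIndependent (ZMod 2) (S.restrict (iasCol A))

/-- The neighborhood circuit `ζ(v)`: `{χ(v)} ∪ {φ(w) : w ∈ N(v)}` if `v` is unlooped,
and `{ψ(v)} ∪ {φ(w) : w ∈ N(v)}` if `v` is looped. -/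
def neighborhoodCircuit {V : Type} [DecidableEq V] (A : Matrix V V (ZMod 2)) (v : V) :
    Set (V ⊕ V ⊕ V) :=
  insert (if A v v = 0 then Sum.inr (Sum.inl v) else Sum.inr (Sum.inr v))
    ((fun w => Sum.inl w) '' {w | w ≠ v ∧ A w v = 1})

/-- The distinguished element of the neighborhood circuit. -/
def cvecElt {V : Type} [DecidableEq V] (A : Matrix V V (ZMod 2)) (v : V) : V ⊕ V ⊕ V :=
  if A v v = 0 then Sum.inr (Sum.inl v) else Sum.inr (Sum.inr v)

lemma zmod2_eq_one {x : ZMod 2} (h : x ≠ 0) : x = 1 := by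
  revert h; revert x; decide

lemma zmod2_eq_zero {x : ZMod 2} (h : x ≠ 1) : x = 0 := by
  revert h; revert x; decide

lemma iasCol_cvec {V : Type} [DecidableEq V] (A : Matrix V V (ZMod 2)) (v : V) :
    iasCol A (cvecElt A v) = fun u => if u = v then 0 else A u v := by
  unfold cvecElt
  by_cases h : A v v = 0
  · simp only [h, if_true]
    funext u
    by_cases hu : u = v <;> simp [iasCol, hu, h]
  · simp only [h, if_false]
    funext u
    by_cases hu : u = v
    · simp only [iasCol, hu, if_pos rfl, zmod2_eq_one h]
      decide
    · simp [iasCol, hu]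

lemma mem_circuit_iff {V : Type} [DecidableEq V] (A : Matrix V V (ZMod 2)) (v : V)
    (x : V ⊕ V ⊕ V) :
    x ∈ neighborhoodCircuit A v ↔
      x = cvecElt A v ∨ ∃ w, (w ≠ v ∧ A w v = 1) ∧ x = Sum.inl w := by
  simp only [neighborhoodCircuit, cvecElt, Set.mem_insert_iff, Set.mem_image,
    Set.mem_setOf_eq]
  constructor
  · rintro (h | ⟨w, hw, rfl⟩)
    · exact Or.inl h
    · exact Or.inr ⟨w, hw, rfl⟩
  · rintro (h | ⟨w, hw, rfl⟩)
    · exact Or.inl h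
    · exact Or.inr ⟨w, hw, rfl⟩

lemma indep_of_missing {V : Type} [Fintype V] [DecidableEq V] (A : Matrix V V (ZMod 2))
    (v : V) (S : Set (V ⊕ V ⊕ V)) (hS : S ⊆ neighborhoodCircuit A v)
    (h : cvecElt A v ∈ S → ∃ w0, (w0 ≠ v ∧ A w0 v = 1) ∧ Sum.inl w0 ∉ S) :
    iasIndep A S := by
  classical
  haveI : Fintype S := Fintype.ofFinite _
  rw [iasIndep, Fintype.linearIndependent_iff]
  intro g hg
  have hpt : ∀ u : V, ∑ i : S, g i * iasCol A i.1 u = 0 := by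
    intro u
    have h1 := congrFun hg u
    simpa [Finset.sum_apply, smul_eq_mul, Set.restrict] using h1
  have hclaim : ∀ hc : cvecElt A v ∈ S, g ⟨cvecElt A v, hc⟩ = 0 := by
    intro hc
    obtain ⟨w0, ⟨hw0v, hw0A⟩, hw0S⟩ := h hc
    have h0 := hpt w0
    rw [Finset.sum_eq_single (⟨cvecElt A v, hc⟩ : S)] at h0
    · rw [iasCol_cvec] at h0
      simpa [hw0v, hw0A] using h0
    · rintro ⟨x, hx⟩ - hne
      rcases (mem_circuit_iff A v x).1 (hS hx) with rfl | ⟨w, ⟨hwv, hwA⟩, rfl⟩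
      · exact (hne (Subtype.ext rfl)).elim
      · have hww0 : w ≠ w0 := by rintro rfl; exact hw0S hx
        have hne' : w0 ≠ w := fun e => hww0 e.symm
        simp [iasCol, hne']
    · intro habs; exact absurd (Finset.mem_univ _) habs
  rintro ⟨x, hx⟩
  rcases (mem_circuit_iff A v x).1 (hS hx) with rfl | ⟨w, ⟨hwv, hwA⟩, rfl⟩
  · exact hclaim hx
  · have hw := hpt w
    rw [Finset.sum_eq_single (⟨Sum.inl w, hx⟩ : S)] at hw
    · simpa [iasCol] using hw
    · rintro ⟨y, hy⟩ - hne
      rcases (mem_circuit_iff A v y).1 (hS hy) with rfl | ⟨w', ⟨hw'v, hw'A⟩, rfl⟩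
      · simp [hclaim hy]
      · have hne2 : w ≠ w' := by
          rintro rfl; exact hne (Subtype.ext rfl)
        simp [iasCol, hne2]
    · intro habs; exact absurd (Finset.mem_univ _) habs

/-- For a non-isolated vertex `v` of a looped simple graph `G`, the neighborhood circuit
`ζ(v)` is a circuit of the isotropic matroid `M[IAS(G)]`: it is a dependent set of
columns, every proper subset of which is independent. -/
theorem neighborhood_circuit_is_circuit {V : Type} [Fintype V] [DecidableEq V]
    (A : Matrix V V (ZMod 2)) (hA : A.IsSymm) (v : V)
    (hv : ∃ w, w ≠ v ∧ A w v = 1) :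
    ¬ iasIndep A (neighborhoodCircuit A v) ∧
    ∀ S : Set (V ⊕ V ⊕ V), S ⊂ neighborhoodCircuit A v → iasIndep A S := by
  classical
  constructor
  · rw [iasIndep]
    letI : Fintype (neighborhoodCircuit A v) :=
      Set.fintypeInsert (if A v v = 0 then Sum.inr (Sum.inl v) else Sum.inr (Sum.inr v))
        ((fun w => Sum.inl w) '' {w | w ≠ v ∧ A w v = 1})
    rw [Fintype.not_linearIndependent_iff]
    have hcmem : cvecElt A v ∈ neighborhoodCircuit A v :=
      (mem_circuit_iff A v _).2 (Or.inl rfl)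
    refine ⟨fun _ => 1, ?_, ⟨cvecElt A v, hcmem⟩, one_ne_zero⟩
    have hsum : ∀ u : V, ∑ i : (neighborhoodCircuit A v), iasCol A i.1 u = 0 := by
      intro u
      rw [Finset.sum_set_coe (f := fun x => iasCol A x u)]
      unfold neighborhoodCircuit
      rw [Set.toFinset_insert, Finset.sum_insert, Set.toFinset_image,
        Finset.sum_image (fun a _ b _ h => Sum.inl.inj h)]
      · have hδ : ∀ w : V, iasCol A (Sum.inl w) u = if u = w then 1 else 0 := fun w => rfl
        simp only [hδ]
        rw [Finset.sum_ite_eq]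
        rw [show (iasCol A (if A v v = 0 then (Sum.inr (Sum.inl v) : V ⊕ V ⊕ V)
              else Sum.inr (Sum.inr v)) u) = (if u = v then 0 else A u v)
            from congrFun (iasCol_cvec A v) u]
        by_cases hu : u = v
        · simp [hu, Set.mem_toFinset]
        · by_cases hA1 : A u v = 1
          · have : u ∈ ({w | w ≠ v ∧ A w v = 1} : Set V).toFinset := by
              simp [Set.mem_toFinset, hu, hA1]
            simp only [hu, if_false, this, if_true, hA1]
            decide
          · have : u ∉ ({w | w ≠ v ∧ A w v = 1} : Set V).toFinset := by
              simp [Set.mem_toFinset, hu, hA1]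
            simp [hu, this, zmod2_eq_zero hA1]
      · simp only [Set.mem_toFinset, Set.mem_image]
        rintro ⟨w, -, hw⟩
        by_cases h : A v v = 0 <;> simp [h] at hw
    funext u
    have h1 : (∑ i : (neighborhoodCircuit A v),
        (1 : ZMod 2) • (neighborhoodCircuit A v).restrict (iasCol A) i) u
        = ∑ i : (neighborhoodCircuit A v), iasCol A i.1 u := by
      simp [Finset.sum_apply, Set.restrict]
    rw [h1, hsum u]; rfl
  · intro S hSsub
    obtain ⟨hS, hne⟩ := Set.ssubset_iff_subset_ne.1 hSsub
    apply indep_of_missing A v S hS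
    intro hc
    obtain ⟨x, hxc, hxS⟩ := Set.exists_of_ssubset hSsub
    rcases (mem_circuit_iff A v x).1 hxc with rfl | ⟨w0, hw0, rfl⟩
    · exact absurd hc hxS
    · exact ⟨w0, hw0, hxS⟩
end

section
/- Let E = (I | A) be a matrix over GF(2) in block form, where A is a square zero-diagonal matrix, with columns partitioned into pairs by the natural 2-partition Ω pairing the i-th column of I with the i-th column of A. If the column matroid of E together with Ω is a 2-sheltering matroid, then A is symmetric. -/
/-- Columns of the block matrix `E = (I | A)` over GF(2): `Sum.inl i` is the `i`-th
column of the identity block, `Sum.inr j` is the `j`-th column of `A`. -/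
def iaCol {n : Type} [DecidableEq n] (A : Matrix n n (ZMod 2)) :
    n ⊕ n → n → ZMod 2
  | Sum.inl i => fun w => if w = i then 1 else 0
  | Sum.inr j => fun w => A w j

/-- Independence of a set of columns of `(I | A)`. -/
def iaIndep {n : Type} [DecidableEq n] (A : Matrix n n (ZMod 2))
    (S : Set (n ⊕ n)) : Prop :=
  LinearIndependent (ZMod 2) (S.restrict (iaCol A))

lemma iaIndep_iff {n : Type} [Fintype n] [DecidableEq n] (A : Matrix n n (ZMod 2))
    (T : Set (n ⊕ n)) :
    iaIndep A T ↔ ∀ c : n ⊕ n → ZMod 2, (∀ x, x ∉ T → c x = 0) →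
      (∑ x, c x • iaCol A x) = 0 → ∀ x, c x = 0 := by
  classical
  haveI : Fintype ↥T := Fintype.ofFinite _
  have hsum : ∀ c : n ⊕ n → ZMod 2, (∀ x, x ∉ T → c x = 0) →
      (∑ x : ↥T, c ↑x • iaCol A ↑x) = ∑ x, c x • iaCol A x := by
    intro c hc
    rw [Finset.sum_set_coe (f := fun x => c x • iaCol A x)]
    refine Finset.sum_subset (Finset.subset_univ _) ?_
    intro x _ hx
    rw [hc x (by simpa using hx), zero_smul]
  unfold iaIndep
  rw [Fintype.linearIndependent_iff]
  constructor
  · intro h c hc hsum0 x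
    by_cases hx : x ∈ T
    · exact h (fun y => c ↑y) (by show (∑ x : ↥T, c ↑x • iaCol A ↑x) = 0; rw [hsum c hc]; exact hsum0) ⟨x, hx⟩
    · exact hc x hx
  · intro h g hg x
    have := h (fun y => if hy : y ∈ T then g ⟨y, hy⟩ else 0)
      (fun y hy => dif_neg hy) ?_ x
    · simpa [x.2] using this
    · rw [← hsum _ (fun y hy => dif_neg hy)]
      simp only [Set.restrict] at hg
      simpa using hg

lemma sum_eval {n : Type} [Fintype n] [DecidableEq n] (A : Matrix n n (ZMod 2))
    (c : n ⊕ n → ZMod 2) (w : n) :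
    (∑ x, c x • iaCol A x) w = c (Sum.inl w) + ∑ k, c (Sum.inr k) * A w k := by
  rw [Finset.sum_apply, Fintype.sum_sum_type]
  simp only [Pi.smul_apply, smul_eq_mul, iaCol, mul_ite, mul_one, mul_zero]
  congr 1
  simp [Finset.sum_ite_eq]

/-- Let `E = (I | A)` over GF(2) with `A` square and zero-diagonal, with columns
partitioned into pairs by the natural 2-partition `Ω` (pairing the `i`-th column of `I`
with the `i`-th column of `A`).  If the column matroid of `E` together with `Ω` is a
2-sheltering matroid, then `A` is symmetric. -/
theorem two_sheltering_implies_symmetric {n : Type} [Fintype n] [DecidableEq n]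
    (A : Matrix n n (ZMod 2)) (hdiag : ∀ i, A i i = 0)
    (hshelt : ∀ S : Set (n ⊕ n), Set.InjOn (Sum.elim id id) S → iaIndep A S →
      ∀ i : n, (∀ s ∈ S, Sum.elim id id s ≠ i) →
        iaIndep A (insert (Sum.inl i) S) ∨ iaIndep A (insert (Sum.inr i) S)) :
    A.IsSymm := by
  classical
  have two : ∀ x : ZMod 2, x + x = 0 := by decide
  have ne_one : ∀ x : ZMod 2, x ≠ 1 → x = 0 := by decide
  have ne_zero : ∀ x : ZMod 2, x ≠ 0 → x = 1 := by decide
  have key : ∀ i j, A i j = 1 → A j i = 1 := by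
    intro i j hij
    by_contra hji'
    have hji : A j i = 0 := ne_one _ hji'
    have hne : i ≠ j := by rintro rfl; rw [hdiag] at hij; exact absurd hij (by decide)
    set S : Set (n ⊕ n) := Sum.inl '' ({i, j}ᶜ) ∪ {Sum.inr j} with hS
    have hmem_inl : ∀ k, Sum.inl k ∈ S ↔ (k ≠ i ∧ k ≠ j) := by
      intro k; simp [hS]
    have hmem_inr : ∀ k, Sum.inr k ∈ S ↔ k = j := by
      intro k; simp [hS]
    have hinj : Set.InjOn (Sum.elim id id) S := by
      rintro x hx y hy hxy
      rcases x with a | a <;> rcases y with b | b <;>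
        simp only [Sum.elim_inl, Sum.elim_inr, id] at hxy <;> subst hxy
      · rfl
      · exact absurd ((hmem_inr _).mp hy) ((hmem_inl _).mp hx).2
      · exact absurd ((hmem_inr _).mp hx) ((hmem_inl _).mp hy).2
      · rfl
    have hindep : iaIndep A S := by
      rw [iaIndep_iff]
      intro c hc hsum0
      have heval : ∀ w, c (Sum.inl w) + ∑ k, c (Sum.inr k) * A w k = 0 := by
        intro w; rw [← sum_eval, hsum0]; rfl
      have hinr : ∀ k, k ≠ j → c (Sum.inr k) = 0 := by
        intro k hk; exact hc _ (fun h => hk ((hmem_inr k).mp h))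
      have hsums : ∀ w, (∑ k, c (Sum.inr k) * A w k) = c (Sum.inr j) * A w j := by
        intro w
        rw [Finset.sum_eq_single j]
        · intro b _ hb; rw [hinr b hb, zero_mul]
        · intro h; exact absurd (Finset.mem_univ j) h
      have hcj : c (Sum.inr j) = 0 := by
        have := heval i
        rw [hsums, hc (Sum.inl i) (fun h => ((hmem_inl i).mp h).1 rfl), hij, mul_one,
          zero_add] at this
        exact this
      intro x
      rcases x with k | k
      · by_cases hk : k ≠ i ∧ k ≠ j
        · have := heval k
          rw [hsums, hcj, zero_mul, add_zero] at this
          exact this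
        · exact hc _ (fun h => hk ((hmem_inl k).mp h))
      · by_cases hk : k = j
        · subst hk; exact hcj
        · exact hinr k hk
    have havoid : ∀ s ∈ S, Sum.elim id id s ≠ i := by
      rintro (a | a) hs
      · simpa using ((hmem_inl a).mp hs).1
      · have := (hmem_inr a).mp hs
        subst this; simpa using (Ne.symm hne)
    rcases hshelt S hinj hindep i havoid with h | h
    · -- insert (inl i) : relation e_i + a_j + Σ_{k≠i,j} A k j e_k = 0
      set c : n ⊕ n → ZMod 2 := fun x =>
        Sum.elim (fun k => if k = i then 1 else if k = j then 0 else A k j)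
          (fun k => if k = j then 1 else 0) x with hcdef
      have h0 := (iaIndep_iff A _).mp h c ?_ ?_ (Sum.inl i)
      · simp [hcdef] at h0
      · rintro (k | k) hx
        · simp only [Set.mem_insert_iff] at hx
          push_neg at hx
          obtain ⟨h1, h2⟩ := hx
          have h1' : k ≠ i := fun e => h1 (by rw [e])
          have h2' : ¬(k ≠ i ∧ k ≠ j) := fun hh => h2 ((hmem_inl k).mpr hh)
          have : k = j := by tauto
          simp [hcdef, h1', this, hne.symm, hdiag]
        · have : k ≠ j := fun e => hx (Set.mem_insert_of_mem _ ((hmem_inr k).mpr e))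
          simp [hcdef, this]
      · funext w
        rw [sum_eval]
        have : (∑ k, c (Sum.inr k) * A w k) = A w j := by
          rw [Finset.sum_eq_single j]
          · simp [hcdef]
          · intro b _ hb; simp [hcdef, hb]
          · intro hj; exact absurd (Finset.mem_univ j) hj
        rw [this]
        by_cases hw : w = i
        · subst hw; simp [hcdef, hij, two]
        · by_cases hw2 : w = j
          · subst hw2; simp [hcdef, hw, hdiag]
          · simp [hcdef, hw, hw2, two]
    · -- insert (inr i) : relation a_i + Σ_{k≠i,j} A k i e_k = 0
      set c : n ⊕ n → ZMod 2 := fun x =>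
        Sum.elim (fun k => if k = i then 0 else if k = j then 0 else A k i)
          (fun k => if k = i then 1 else 0) x with hcdef
      have h0 := (iaIndep_iff A _).mp h c ?_ ?_ (Sum.inr i)
      · simp [hcdef] at h0
      · rintro (k | k) hx
        · simp only [Set.mem_insert_iff] at hx
          push_neg at hx
          obtain ⟨-, h2⟩ := hx
          have h2' : ¬(k ≠ i ∧ k ≠ j) := fun hh => h2 ((hmem_inl k).mpr hh)
          by_cases hk : k = i
          · simp [hcdef, hk]
          · have : k = j := by tauto
            simp [hcdef, hk, this]
        · simp only [Set.mem_insert_iff] at hx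
          push_neg at hx
          obtain ⟨h1, h2⟩ := hx
          have h1' : k ≠ i := fun e => h1 (by rw [e])
          simp [hcdef, h1']
      · funext w
        rw [sum_eval]
        have : (∑ k, c (Sum.inr k) * A w k) = A w i := by
          rw [Finset.sum_eq_single i]
          · simp [hcdef]
          · intro b _ hb; simp [hcdef, hb]
          · intro hj; exact absurd (Finset.mem_univ i) hj
        rw [this]
        by_cases hw : w = i
        · subst hw; simp [hcdef, hdiag]
        · by_cases hw2 : w = j
          · subst hw2; simp [hcdef, hw, hji]
          · simp [hcdef, hw, hw2, two]
  rw [Matrix.IsSymm]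
  ext i j
  rw [Matrix.transpose_apply]
  by_cases h : A j i = 1
  · rw [h, key j i h]
  · have h0 : A j i = 0 := ne_one _ h
    rw [h0]
    by_contra hne0
    have h1 : A i j = 1 := ne_zero _ (Ne.symm hne0)
    rw [key i j h1] at h0
    exact absurd h0 (by decide)
end

section
/- Let E = (I | A) be a matrix over GF(2) in block form, where A is a square symmetric zero-diagonal matrix, with columns partitioned into pairs by the natural 2-partition Ω. Then the column matroid of E together with Ω is a 2-sheltering matroid: for every independent subtransversal J and block ω = {x,y} disjoint from J, at least one of J ∪ {x}, J ∪ {y} is an independent set of columns. -/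
lemma ia_expand {n : Type} [Fintype n] [DecidableEq n] (A : Matrix n n (ZMod 2))
    (c : (n ⊕ n) →₀ ZMod 2) (x : n → ZMod 2)
    (h : Finsupp.linearCombination (ZMod 2) (iaCol A) c = x) :
    ∀ w, c (Sum.inl w) + ∑ j, c (Sum.inr j) * A w j = x w := by
  intro w
  rw [Finsupp.linearCombination_apply] at h
  have h1 := congrFun h w
  rw [Finsupp.sum, Finset.sum_apply] at h1
  rw [Finset.sum_subset (Finset.subset_univ c.support)
    (fun s _ hs => by simp [Finsupp.notMem_support_iff.mp hs])] at h1
  rw [Fintype.sum_sum_type] at h1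
  simp only [iaCol, Pi.smul_apply, smul_eq_mul, mul_ite, mul_one, mul_zero] at h1
  rw [Finset.sum_ite_eq Finset.univ w (fun j => c (Sum.inl j))] at h1
  simp only [Finset.mem_univ, if_true] at h1
  exact h1

/-- Let `E = (I | A)` over GF(2) with `A` square, symmetric and zero-diagonal, with
columns partitioned into pairs by the natural 2-partition `Ω`.  Then the column matroid
of `E` together with `Ω` is a 2-sheltering matroid: for every independent subtransversal
`J` and every block `{Sum.inl i, Sum.inr i}` disjoint from `J`, at least one of the two
extensions of `J` by an element of the block is independent. -/
theorem symmetric_gives_two_sheltering {n : Type} [Fintype n] [DecidableEq n]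
    (A : Matrix n n (ZMod 2)) (hsymm : A.IsSymm) (hdiag : ∀ i, A i i = 0) :
    ∀ S : Set (n ⊕ n), Set.InjOn (Sum.elim id id) S → iaIndep A S →
      ∀ i : n, (∀ s ∈ S, Sum.elim id id s ≠ i) →
        iaIndep A (insert (Sum.inl i) S) ∨ iaIndep A (insert (Sum.inr i) S) := by
  intro S hinj hS i hi
  by_contra hcon
  push_neg at hcon
  obtain ⟨h1, h2⟩ := hcon
  have hiL : Sum.inl i ∉ S := fun h => hi _ h rfl
  have hiR : Sum.inr i ∉ S := fun h => hi _ h rfl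
  have hS' : LinearIndependent (ZMod 2) fun x : S => iaCol A x := hS
  have m1 : iaCol A (Sum.inl i) ∈ Submodule.span (ZMod 2) (iaCol A '' S) := by
    by_contra hm
    exact h1 ((linearIndepOn_insert hiL).mpr ⟨hS', hm⟩)
  have m2 : iaCol A (Sum.inr i) ∈ Submodule.span (ZMod 2) (iaCol A '' S) := by
    by_contra hm
    exact h2 ((linearIndepOn_insert hiR).mpr ⟨hS', hm⟩)
  obtain ⟨c, hc, hct⟩ := (Finsupp.mem_span_image_iff_linearCombination (ZMod 2)).mp m1
  obtain ⟨d, hd, hdt⟩ := (Finsupp.mem_span_image_iff_linearCombination (ZMod 2)).mp m2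
  have hcS : ∀ x, c x ≠ 0 → x ∈ S := fun x hx =>
    (Finsupp.mem_supported (ZMod 2) c).mp hc (Finsupp.mem_support_iff.mpr hx)
  have hdS : ∀ x, d x ≠ 0 → x ∈ S := fun x hx =>
    (Finsupp.mem_supported (ZMod 2) d).mp hd (Finsupp.mem_support_iff.mpr hx)
  have Eq1 := ia_expand A c _ hct
  have Eq2 := ia_expand A d _ hdt
  simp only [iaCol] at Eq1 Eq2
  have hnot : ∀ w : n, ¬ (Sum.inl w ∈ S ∧ Sum.inr w ∈ S) := by
    rintro w ⟨ha, hb⟩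
    exact Sum.inl_ne_inr (hinj ha hb rfl)
  have hcLi : c (Sum.inl i) = 0 := by
    by_contra h; exact hiL (hcS _ h)
  have hdRi : d (Sum.inr i) = 0 := by
    by_contra h; exact hiR (hdS _ h)
  have cross1 : ∀ w, d (Sum.inr w) * c (Sum.inl w) = 0 := by
    intro w
    by_cases h : d (Sum.inr w) = 0
    · rw [h, zero_mul]
    by_cases h' : c (Sum.inl w) = 0
    · rw [h', mul_zero]
    exact absurd ⟨hcS _ h', hdS _ h⟩ (hnot w)
  have cross2 : ∀ w, c (Sum.inr w) * d (Sum.inl w) = 0 := by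
    intro w
    by_cases h : c (Sum.inr w) = 0
    · rw [h, zero_mul]
    by_cases h' : d (Sum.inl w) = 0
    · rw [h', mul_zero]
    exact absurd ⟨hdS _ h', hcS _ h⟩ (hnot w)
  have hsym : ∀ a b, A a b = A b a := fun a b => by
    rw [← Matrix.transpose_apply A a b, hsymm]
  have B0 : ∑ w, d (Sum.inr w) * ∑ j, c (Sum.inr j) * A w j = 0 := by
    have e : ∑ w, d (Sum.inr w) * (c (Sum.inl w) + ∑ j, c (Sum.inr j) * A w j)
        = ∑ w, d (Sum.inr w) * (if w = i then 1 else 0) :=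
      Finset.sum_congr rfl fun w _ => by rw [Eq1 w]
    rw [Finset.sum_congr rfl (fun w _ => mul_add (d (Sum.inr w)) _ _),
      Finset.sum_add_distrib, Finset.sum_eq_zero (fun w _ => cross1 w), zero_add] at e
    rw [e]
    simp [mul_ite, Finset.sum_ite_eq', hdRi]
  have hBB : ∑ w, c (Sum.inr w) * ∑ j, d (Sum.inr j) * A w j
      = ∑ w, d (Sum.inr w) * ∑ j, c (Sum.inr j) * A w j := by
    simp only [Finset.mul_sum]
    rw [Finset.sum_comm]
    refine Finset.sum_congr rfl fun w _ => Finset.sum_congr rfl fun j _ => ?_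
    rw [hsym j w]; ring
  have target0 : ∑ w, c (Sum.inr w) * A w i = 0 := by
    have e2 : ∑ w, c (Sum.inr w) * (d (Sum.inl w) + ∑ j, d (Sum.inr j) * A w j)
        = ∑ w, c (Sum.inr w) * A w i :=
      Finset.sum_congr rfl fun w _ => by rw [Eq2 w]
    rw [Finset.sum_congr rfl (fun w _ => mul_add (c (Sum.inr w)) _ _),
      Finset.sum_add_distrib, Finset.sum_eq_zero (fun w _ => cross2 w), zero_add,
      hBB, B0] at e2
    exact e2.symm
  have e3 := Eq1 i
  rw [if_pos rfl, hcLi, zero_add] at e3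
  rw [Finset.sum_congr rfl (fun j _ => by rw [hsym i j] :
    ∀ j ∈ Finset.univ, c (Sum.inr j) * A i j = c (Sum.inr j) * A j i)] at e3
  rw [target0] at e3
  exact one_ne_zero e3.symm
end

section
/- Let A be a symmetric matrix over GF(2) indexed by V × V with rows/columns indexed by V = V₁ ⊔ V₂ in block form [[A₁₁, A₁₂],[A₁₂ᵀ, A₂₂]] where A₁₁ and A₂₂ are zero (i.e., A is the adjacency matrix of a bipartite unlooped graph with classes V₁, V₂). Then the rank over GF(2) of the transversal T₁ consisting of {φ(v) : v ∈ V₁} ∪ {χ(v) : v ∈ V₂} in IAS(G) plus the rank of T₂ = {φ(v) : v ∈ V₂} ∪ {χ(v) : v ∈ V₁} equals |V|. -/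
/-- Adjacency matrix over GF(2) of the bipartite simple graph with classes `V₁, V₂` and
biadjacency matrix `A₁`. -/
def bipAdj {V₁ V₂ : Type} (A₁ : Matrix V₁ V₂ (ZMod 2)) :
    Matrix (V₁ ⊕ V₂) (V₁ ⊕ V₂) (ZMod 2)
  | Sum.inl i, Sum.inr j => A₁ i j
  | Sum.inr j, Sum.inl i => A₁ i j
  | _, _ => 0

lemma phi_eq {V₁ V₂ : Type} [DecidableEq V₁] [DecidableEq V₂]
    (A : Matrix (V₁ ⊕ V₂) (V₁ ⊕ V₂) (ZMod 2)) (v : V₁ ⊕ V₂) :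
    iasCol A (Sum.inl v) = Pi.single v (1 : ZMod 2) := by
  funext w; simp [iasCol, Pi.single_apply]

lemma chi_eq_r {V₁ V₂ : Type} [Fintype V₁] [DecidableEq V₁] [DecidableEq V₂]
    (A₁ : Matrix V₁ V₂ (ZMod 2)) (j : V₂) :
    iasCol (bipAdj A₁) (Sum.inr (Sum.inl (Sum.inr j))) =
      ∑ i : V₁, A₁ i j • Pi.single (Sum.inl i : V₁ ⊕ V₂) (1 : ZMod 2) := by
  funext w
  simp only [iasCol, Finset.sum_apply, Pi.smul_apply, Pi.single_apply, smul_eq_mul, mul_ite,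
    mul_one, mul_zero]
  cases w with
  | inl i => simp [bipAdj]
  | inr j' => simp [bipAdj]

lemma chi_eq_l {V₁ V₂ : Type} [Fintype V₂] [DecidableEq V₁] [DecidableEq V₂]
    (A₁ : Matrix V₁ V₂ (ZMod 2)) (i : V₁) :
    iasCol (bipAdj A₁) (Sum.inr (Sum.inl (Sum.inl i))) =
      ∑ j : V₂, A₁ i j • Pi.single (Sum.inr j : V₁ ⊕ V₂) (1 : ZMod 2) := by
  funext w
  simp only [iasCol, Finset.sum_apply, Pi.smul_apply, Pi.single_apply, smul_eq_mul, mul_ite,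
    mul_one, mul_zero]
  cases w with
  | inl i' => simp [bipAdj]
  | inr j => simp [bipAdj]

lemma indep_inl {V₁ V₂ : Type} [Finite V₁] [Finite V₂] [DecidableEq V₁] [DecidableEq V₂] :
    LinearIndependent (ZMod 2)
      (fun i : V₁ => (Pi.single (Sum.inl i) 1 : (V₁ ⊕ V₂) → ZMod 2)) := by
  have h : LinearIndependent (ZMod 2)
      (fun i : V₁ => Pi.basisFun (ZMod 2) (V₁ ⊕ V₂) (Sum.inl i)) :=
    (Pi.basisFun (ZMod 2) (V₁ ⊕ V₂)).linearIndependent.comp Sum.inl Sum.inl_injective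
  simpa [Pi.basisFun_apply] using h

lemma indep_inr {V₁ V₂ : Type} [Finite V₁] [Finite V₂] [DecidableEq V₁] [DecidableEq V₂] :
    LinearIndependent (ZMod 2)
      (fun j : V₂ => (Pi.single (Sum.inr j) 1 : (V₁ ⊕ V₂) → ZMod 2)) := by
  have h : LinearIndependent (ZMod 2)
      (fun j : V₂ => Pi.basisFun (ZMod 2) (V₁ ⊕ V₂) (Sum.inr j)) :=
    (Pi.basisFun (ZMod 2) (V₁ ⊕ V₂)).linearIndependent.comp Sum.inr Sum.inr_injective
  simpa [Pi.basisFun_apply] using h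

/-- Let `G` be the bipartite unlooped simple graph with classes `V₁, V₂` and adjacency
matrix `[[0, A₁],[A₁ᵀ, 0]]`.  Consider the two disjoint transversals of the vertex
triples `T₁ = {φ(v) : v ∈ V₁} ∪ {χ(v) : v ∈ V₂}` and `T₂ = {φ(v) : v ∈ V₂} ∪ {χ(v) : v ∈ V₁}`
in `IAS(G)`.  Then the GF(2)-rank of the columns of `T₁` plus the rank of the columns of
`T₂` equals `|V₁ ⊕ V₂|`. -/
theorem bipartite_transversal_rank_sum {V₁ V₂ : Type} [Fintype V₁] [Fintype V₂]
    [DecidableEq V₁] [DecidableEq V₂] (A₁ : Matrix V₁ V₂ (ZMod 2)) :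
    Module.finrank (ZMod 2) (Submodule.span (ZMod 2)
      (iasCol (bipAdj A₁) ''
        ({x | ∃ i : V₁, x = Sum.inl (Sum.inl i)} ∪
         {x | ∃ j : V₂, x = Sum.inr (Sum.inl (Sum.inr j))}))) +
    Module.finrank (ZMod 2) (Submodule.span (ZMod 2)
      (iasCol (bipAdj A₁) ''
        ({x | ∃ j : V₂, x = Sum.inl (Sum.inr j)} ∪
         {x | ∃ i : V₁, x = Sum.inr (Sum.inl (Sum.inl i))}))) =
    Fintype.card (V₁ ⊕ V₂) := by
  have h1 : Submodule.span (ZMod 2) (iasCol (bipAdj A₁) ''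
        ({x | ∃ i : V₁, x = Sum.inl (Sum.inl i)} ∪
         {x | ∃ j : V₂, x = Sum.inr (Sum.inl (Sum.inr j))})) =
      Submodule.span (ZMod 2)
        (Set.range fun i : V₁ => Pi.single (Sum.inl i : V₁ ⊕ V₂) (1 : ZMod 2)) := by
    apply le_antisymm
    · rw [Submodule.span_le]
      rintro _ ⟨x, hx | hx, rfl⟩
      · obtain ⟨i, rfl⟩ := hx
        rw [phi_eq]
        exact Submodule.subset_span ⟨i, rfl⟩
      · obtain ⟨j, rfl⟩ := hx
        rw [chi_eq_r]
        exact Submodule.sum_mem _ fun i _ =>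
          Submodule.smul_mem _ _ (Submodule.subset_span ⟨i, rfl⟩)
    · rw [Submodule.span_le]
      rintro _ ⟨i, rfl⟩
      show (Pi.single (Sum.inl i : V₁ ⊕ V₂) (1 : ZMod 2) : V₁ ⊕ V₂ → ZMod 2) ∈ _
      rw [← phi_eq (bipAdj A₁) (Sum.inl i)]
      exact Submodule.subset_span ⟨Sum.inl (Sum.inl i), Or.inl ⟨i, rfl⟩, rfl⟩
  have h2 : Submodule.span (ZMod 2) (iasCol (bipAdj A₁) ''
        ({x | ∃ j : V₂, x = Sum.inl (Sum.inr j)} ∪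
         {x | ∃ i : V₁, x = Sum.inr (Sum.inl (Sum.inl i))})) =
      Submodule.span (ZMod 2)
        (Set.range fun j : V₂ => Pi.single (Sum.inr j : V₁ ⊕ V₂) (1 : ZMod 2)) := by
    apply le_antisymm
    · rw [Submodule.span_le]
      rintro _ ⟨x, hx | hx, rfl⟩
      · obtain ⟨j, rfl⟩ := hx
        rw [phi_eq]
        exact Submodule.subset_span ⟨j, rfl⟩
      · obtain ⟨i, rfl⟩ := hx
        rw [chi_eq_l]
        exact Submodule.sum_mem _ fun j _ =>
          Submodule.smul_mem _ _ (Submodule.subset_span ⟨j, rfl⟩)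
    · rw [Submodule.span_le]
      rintro _ ⟨j, rfl⟩
      show (Pi.single (Sum.inr j : V₁ ⊕ V₂) (1 : ZMod 2) : V₁ ⊕ V₂ → ZMod 2) ∈ _
      rw [← phi_eq (bipAdj A₁) (Sum.inr j)]
      exact Submodule.subset_span ⟨Sum.inl (Sum.inr j), Or.inl ⟨j, rfl⟩, rfl⟩
  rw [h1, h2, finrank_span_eq_card indep_inl, finrank_span_eq_card indep_inr,
    Fintype.card_sum]
end

section
/- Let Q = (M, Ω) be a 2-sheltering matroid such that the multimatroid Z(Q) is nondegenerate and tight, and suppose M is representable over a field F. Then for every basis B of M that is a transversal of Ω, in any standard representation (I | A) of M with respect to B, the matrix A has all diagonal entries zero (where the diagonal pairs a non-basis element with the basis element of its block), and the rank of M equals |Ω|. -/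
/-- The rank of a set `S` in a matroid `M`: the largest cardinality of an independent
subset of `S`. -/
noncomputable def mrank {U : Type} (M : Matroid U) (S : Set U) : ℕ :=
  sSup {k : ℕ | ∃ J ⊆ S, M.Indep J ∧ J.ncard = k}

lemma mrank_bdd {U : Type} [Fintype U] (M : Matroid U) (S : Set U) :
    BddAbove {k : ℕ | ∃ J ⊆ S, M.Indep J ∧ J.ncard = k} := by
  refine ⟨S.ncard, fun k hk => ?_⟩
  obtain ⟨J, hJS, _, rfl⟩ := hk
  exact Set.ncard_le_ncard hJS S.toFinite

lemma le_mrank {U : Type} [Fintype U] {M : Matroid U} {J S : Set U}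
    (hJ : M.Indep J) (hJS : J ⊆ S) : J.ncard ≤ mrank M S :=
  le_csSup (mrank_bdd M S) ⟨J, hJS, hJ, rfl⟩

lemma mrank_indep {U : Type} [Fintype U] {M : Matroid U} {S : Set U}
    (hS : M.Indep S) : mrank M S = S.ncard := by
  refine le_antisymm (csSup_le ⟨0, ∅, Set.empty_subset _, M.empty_indep, Set.ncard_empty U⟩ ?_)
    (le_mrank hS subset_rfl)
  rintro k ⟨J, hJS, _, rfl⟩
  exact Set.ncard_le_ncard hJS S.toFinite

/-- Let `Q = (M, Ω)` be a 2-sheltering matroid, where the 2-partition `Ω` of the ground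
set `U` is given by the fibers of `π : U → n` (each fiber of size 2), such that the
multimatroid `Z(Q)` (whose independent sets are the independent subtransversals) is
tight, and suppose `M` is representable over a field `F`.  Then:
(1) every base of `M` has cardinality `|Ω|` (so the rank of `M` is `|Ω|`); and
(2) for every base `B` of `M` that is a transversal of `Ω` and every standard
representation `φ : U → (B → F)` of `M` with respect to `B` (the elements of `B` being
sent to the standard basis vectors), the "diagonal" entries vanish: for every `u ∉ B`,
the coordinate of `φ u` at the basis element lying in the same block as `u` is zero. -/
theorem tight_two_sheltering_representable {U n : Type} [Fintype U] [Fintype n]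
    [DecidableEq U] [DecidableEq n] (F : Type) [Field F]
    (π : U → n) (hπ : ∀ b : n, {u : U | π u = b}.ncard = 2)
    (M : Matroid U) (hE : M.E = Set.univ)
    (shelter : ∀ I : Set U, M.Indep I → Set.InjOn π I →
      ∀ x y : U, x ≠ y → π x = π y → (∀ i ∈ I, π i ≠ π x) →
        M.Indep (insert x I) ∨ M.Indep (insert y I))
    (tight : ∀ S : Set U, Set.InjOn π S → S.ncard = Fintype.card n - 1 →
      ∀ b : n, (∀ s ∈ S, π s ≠ b) →
        ∃ x : U, π x = b ∧ mrank M (insert x S) = mrank M S)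
    (hrep : ∃ (d : ℕ) (φ : U → Fin d → F),
      ∀ S : Set U, M.Indep S ↔ LinearIndependent F (S.restrict φ)) :
    (∀ B : Set U, M.IsBase B → B.ncard = Fintype.card n) ∧
    (∀ B : Set U, M.IsBase B → Set.InjOn π B → (∀ b : n, ∃ u ∈ B, π u = b) →
      ∀ φ : U → (↥B → F),
        (∀ S : Set U, M.Indep S ↔ LinearIndependent F (S.restrict φ)) →
        (∀ b : ↥B, φ ↑b = fun b' => if b' = b then 1 else 0) →
        ∀ u : U, u ∉ B → ∀ b : ↥B, π ↑b = π u → φ u b = 0) := by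
  classical
  -- each fiber containing two distinct elements is exactly that pair
  have fiber : ∀ u v : U, u ≠ v → π u = π v → {w : U | π w = π u} = {u, v} := by
    intro u v huv hpi
    have hsub : ({u, v} : Set U) ⊆ {w | π w = π u} := by
      rintro w (rfl | rfl)
      · rfl
      · exact hpi.symm
    refine (Set.eq_of_subset_of_ncard_le hsub ?_ (Set.toFinite _)).symm
    rw [hπ (π u), Set.ncard_pair huv]
  -- an injective transversal has cardinality `card n`
  have hcardB : ∀ B : Set U, Set.InjOn π B → (∀ b : n, ∃ v ∈ B, π v = b) →
      B.ncard = Fintype.card n := by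
    intro B hinj hsur
    have himg : π '' B = Set.univ := by
      ext b
      simp only [Set.mem_image, Set.mem_univ, iff_true]
      obtain ⟨v, hv, hb⟩ := hsur b
      exact ⟨v, hv, hb⟩
    calc B.ncard = (π '' B).ncard := (Set.ncard_image_of_injOn hinj).symm
    _ = Fintype.card n := by rw [himg, Set.ncard_univ, Nat.card_eq_fintype_card]
  -- key consequence of tightness
  have key : ∀ T : Set U, M.Indep T → Set.InjOn π T → (∀ b : n, ∃ v ∈ T, π v = b) →
      ∀ u : U, u ∉ T → ∀ t : U, t ∈ T → π t = π u → ¬ M.Indep (insert u (T \ {t})) := by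
    intro T hT hinj hsur u hu t ht hπt hbad
    set S := T \ {t} with hSdef
    have hST : S ⊆ T := Set.diff_subset
    have hSindep : M.Indep S := hT.subset hST
    have hTn : T.ncard = Fintype.card n := hcardB T hinj hsur
    have hn1 : 1 ≤ Fintype.card n := Fintype.card_pos_iff.mpr ⟨π u⟩
    have hScard : S.ncard = Fintype.card n - 1 := by
      rw [hSdef, Set.ncard_diff_singleton_of_mem ht, hTn]
    have hut : u ≠ t := fun h => hu (h ▸ ht)
    have hfib : {w : U | π w = π u} = {u, t} := fiber u t hut hπt.symm
    have hSnot : ∀ s ∈ S, π s ≠ π u := by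
      intro s hs hps
      have hmem : s ∈ ({u, t} : Set U) := by rw [← hfib]; exact hps
      rcases hmem with rfl | rfl
      · exact hu (hST hs)
      · exact hs.2 rfl
    obtain ⟨x, hx, hrk⟩ := tight S (hinj.mono hST) hScard (π u) hSnot
    have hxmem : x ∈ ({u, t} : Set U) := by rw [← hfib]; exact hx
    have hmS : mrank M S = Fintype.card n - 1 := by rw [mrank_indep hSindep, hScard]
    have huS : u ∉ S := fun h => hu (hST h)
    rcases hxmem with rfl | rfl
    · have h1 : (insert x S).ncard = Fintype.card n := by
        rw [Set.ncard_insert_of_notMem huS S.toFinite, hScard]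
        omega
      have h2 := mrank_indep hbad
      rw [h2, h1, hmS] at hrk
      omega
    · have hTeq : insert x S = T := by
        rw [hSdef, Set.insert_diff_singleton, Set.insert_eq_self.mpr ht]
      rw [hTeq, mrank_indep hT, hTn, hmS] at hrk
      omega
  -- build an independent transversal using the sheltering property
  have build : ∀ s : Finset n, ∃ I : Set U, M.Indep I ∧ Set.InjOn π I ∧ π '' I = ↑s := by
    intro s
    induction s using Finset.induction_on with
    | empty => exact ⟨∅, M.empty_indep, Set.injOn_empty π, by simp⟩
    | @insert b s hb ih =>
      obtain ⟨I, hI, hinj, himg⟩ := ih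
      obtain ⟨x, y, hxy, hfib2⟩ := Set.ncard_eq_two.mp (hπ b)
      have hpx : π x = b := by
        have : x ∈ {u : U | π u = b} := by rw [hfib2]; exact Set.mem_insert _ _
        exact this
      have hpy : π y = b := by
        have : y ∈ {u : U | π u = b} := by
          rw [hfib2]; exact Set.mem_insert_of_mem _ rfl
        exact this
      have hnotin : ∀ i ∈ I, π i ≠ π x := by
        intro i hi h
        have h2 : π i ∈ (↑s : Set n) := himg ▸ Set.mem_image_of_mem π hi
        rw [h, hpx] at h2
        exact hb h2
      have step : ∀ z : U, π z = b → M.Indep (insert z I) →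
          ∃ I' : Set U, M.Indep I' ∧ Set.InjOn π I' ∧ π '' I' = ↑(insert b s) := by
        intro z hz hind
        have hzI : z ∉ I := by
          intro h
          have h2 : π z ∈ (↑s : Set n) := himg ▸ Set.mem_image_of_mem π h
          rw [hz] at h2
          exact hb h2
        refine ⟨insert z I, hind, ?_, ?_⟩
        · rw [Set.injOn_insert hzI]
          refine ⟨hinj, ?_⟩
          rw [himg, hz]
          exact hb
        · rw [Set.image_insert_eq, himg, hz, Finset.coe_insert]
      rcases shelter I hI hinj x y hxy (hpx.trans hpy.symm) hnotin with hind | hind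
      · exact step x hpx hind
      · exact step y hpy hind
  obtain ⟨T, hT, hTinj, hTimg⟩ := build Finset.univ
  have hTsur : ∀ b : n, ∃ v ∈ T, π v = b := by
    intro b
    have : b ∈ π '' T := by rw [hTimg]; simp
    obtain ⟨v, hv, hvb⟩ := this
    exact ⟨v, hv, hvb⟩
  have hTbase : M.IsBase T := by
    obtain ⟨B, hB, hTB⟩ := hT.exists_isBase_superset
    have hBT : B = T := by
      refine Set.Subset.antisymm ?_ hTB
      intro u huB
      by_contra huT
      obtain ⟨t, htT, hpt⟩ := hTsur (π u)
      exact key T hT hTinj hTsur u huT t htT hpt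
        (hB.indep.subset (Set.insert_subset huB (Set.diff_subset.trans hTB)))
    rwa [hBT] at hB
  have hTcard : T.ncard = Fintype.card n := hcardB T hTinj hTsur
  constructor
  · intro B hB
    rw [hB.ncard_eq_ncard_of_isBase hTbase, hTcard]
  · intro B hB hBinj hBsur φ hφrep hφstd u hu b hπb
    by_contra hne
    have hk := key B hB.indep hBinj hBsur u hu (↑b) b.2 hπb
    apply hk
    rw [hφrep]
    set S : Set U := insert u (B \ {(↑b : U)}) with hSdef
    haveI : Fintype ↥S := S.toFinite.fintype
    rw [Fintype.linearIndependent_iff]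
    intro g hg
    have hval : ∀ b' : ↥B, ∑ i : ↥S, g i * φ (↑i) b' = 0 := by
      intro b'
      have := congrFun hg b'
      simpa [Set.restrict, Finset.sum_apply] using this
    set u₀ : ↥S := ⟨u, Set.mem_insert _ _⟩ with hu₀
    have hmemS : ∀ i : ↥S, i ≠ u₀ → (↑i : U) ∈ B \ {(↑b : U)} := by
      intro i hi
      rcases i.2 with h | h
      · exact absurd (Subtype.ext h) hi
      · exact h
    have hstd0 : ∀ i : ↥S, i ≠ u₀ → ∀ b' : ↥B, (↑b' : U) ≠ ↑i → φ (↑i) b' = 0 := by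
      intro i hi b' hb'
      have hiB : (↑i : U) ∈ B := (hmemS i hi).1
      have := hφstd ⟨↑i, hiB⟩
      have h2 : φ (↑i : U) b' = if b' = ⟨↑i, hiB⟩ then 1 else 0 := by
        rw [this]
      rw [h2, if_neg]
      intro h
      exact hb' (by rw [h])
    have hgu : g u₀ = 0 := by
      have h1 := hval b
      rw [Finset.sum_eq_single u₀ ?_ (by simp)] at h1
      · rcases mul_eq_zero.mp h1 with h | h
        · exact h
        · exact absurd h hne
      · intro i _ hi
        have : φ (↑i : U) b = 0 := by
          refine hstd0 i hi b ?_
          have := (hmemS i hi).2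
          simp only [Set.mem_singleton_iff] at this
          exact fun h => this (h.symm)
        rw [this, mul_zero]
    intro i
    rcases eq_or_ne i u₀ with rfl | hi
    · exact hgu
    · have hiB : (↑i : U) ∈ B := (hmemS i hi).1
      have h1 := hval ⟨↑i, hiB⟩
      rw [Finset.sum_eq_single i ?_ (by simp)] at h1
      · have hstd1 : φ (↑i : U) ⟨↑i, hiB⟩ = 1 := by
          rw [hφstd ⟨↑i, hiB⟩]
          simp
        rw [hstd1, mul_one] at h1
        exact h1
      · intro j _ hj
        rcases eq_or_ne j u₀ with rfl | hju
        · rw [hgu, zero_mul]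
        · have : φ (↑j : U) ⟨↑i, hiB⟩ = 0 := by
            refine hstd0 j hju ⟨↑i, hiB⟩ ?_
            intro h
            exact hj (Subtype.ext (by exact h.symm ▸ rfl))
          rw [this, mul_zero]
end

section
/- Suppose two symmetric GF(2) matrices A and A′ indexed by the same set T₂ give 2-sheltering matroids Q(A) and Q(A′) via the representations (I | A) and (I | A′) with the same natural 2-partition τ = (T₁, T₂), and suppose the multimatroids Z(Q(A)) and Z(Q(A′)) coincide (have the same independent subtransversals). Then A = A′. -/
namespace ShelterAux

variable {n : Type} [Fintype n] [DecidableEq n]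

lemma zmod2_add_self (x : ZMod 2) : x + x = 0 := by
  rw [← two_mul, show (2 : ZMod 2) = 0 from rfl, zero_mul]

/-- Sum split at two distinguished points. -/
lemma sum_split2 {i j : n} (hij : i ≠ j) (f : n → ZMod 2) :
    ∑ k, f k = f i + f j + ∑ k ∈ Finset.univ \ {i, j}, f k := by
  rw [← Finset.sum_sdiff (Finset.subset_univ {i, j}), Finset.sum_pair hij]
  ring

lemma sum_split1 (i : n) (f : n → ZMod 2) :
    ∑ k, f k = f i + ∑ k ∈ Finset.univ \ {i}, f k := by
  rw [← Finset.sum_sdiff (Finset.subset_univ {i}), Finset.sum_singleton]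
  ring

/-- The family: identity columns except column `i` replaced by the `i`-th column of `A`. -/
def vDiag (A : Matrix n n (ZMod 2)) (i : n) : n → n → ZMod 2 :=
  fun k => if k = i then (fun w => A w i) else (fun w => if w = k then 1 else 0)

lemma vDiag_key (A : Matrix n n (ZMod 2)) (i : n) (g : n → ZMod 2) (w : n) :
    (∑ k, g k • vDiag A i k) w = g i * A w i + (if w = i then 0 else g w) := by
  rw [Finset.sum_apply, sum_split1 i]
  have h2 : ∑ k ∈ Finset.univ \ {i}, (g k • vDiag A i k) w
      = ∑ k ∈ Finset.univ \ {i}, (if w = k then g k else 0) := by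
    refine Finset.sum_congr rfl fun k hk => ?_
    simp only [Finset.mem_sdiff, Finset.mem_singleton] at hk
    simp [vDiag, hk.2, mul_ite]
  rw [h2, Finset.sum_ite_eq]
  by_cases hwi : w = i <;> simp [vDiag, hwi]

lemma li_vDiag (A : Matrix n n (ZMod 2)) (i : n) :
    LinearIndependent (ZMod 2) (vDiag A i) ↔ A i i ≠ 0 := by
  rw [Fintype.linearIndependent_iff]
  constructor
  · intro H hAii
    have h1 := H (fun k => if k = i then 1 else A k i) ?_ i
    · simp at h1
    · funext w
      rw [vDiag_key]
      by_cases hwi : w = i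
      · subst hwi; simp [hAii]
      · simp [hwi, zmod2_add_self]
  · intro hAii g hg
    have hi : g i = 0 := by
      have := congrFun hg i
      rw [vDiag_key] at this
      simp at this
      exact this.resolve_right hAii
    intro k
    by_cases hk : k = i
    · exact hk ▸ hi
    · have := congrFun hg k
      rw [vDiag_key] at this
      simpa [hk, hi] using this

/-- The family: identity columns except columns `i, j` replaced by those columns of `A`. -/
def vOff (A : Matrix n n (ZMod 2)) (i j : n) : n → n → ZMod 2 :=
  fun k => if k = i then (fun w => A w i) else if k = j then (fun w => A w j)
    else (fun w => if w = k then 1 else 0)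

lemma vOff_key (A : Matrix n n (ZMod 2)) {i j : n} (hij : i ≠ j) (g : n → ZMod 2) (w : n) :
    (∑ k, g k • vOff A i j k) w
      = g i * A w i + g j * A w j + (if w = i then 0 else if w = j then 0 else g w) := by
  rw [Finset.sum_apply, sum_split2 hij]
  have h2 : ∑ k ∈ Finset.univ \ {i, j}, (g k • vOff A i j k) w
      = ∑ k ∈ Finset.univ \ {i, j}, (if w = k then g k else 0) := by
    refine Finset.sum_congr rfl fun k hk => ?_
    simp only [Finset.mem_sdiff, Finset.mem_insert, Finset.mem_singleton, not_or] at hk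
    simp [vOff, hk.2.1, hk.2.2, mul_ite]
  rw [h2, Finset.sum_ite_eq]
  by_cases hwi : w = i <;> by_cases hwj : w = j <;>
    simp [vOff, hij, hij.symm, hwi, hwj]

lemma li_vOff (A : Matrix n n (ZMod 2)) {i j : n} (hij : i ≠ j) :
    LinearIndependent (ZMod 2) (vOff A i j) ↔ A i i * A j j - A i j * A j i ≠ 0 := by
  set d := A i i * A j j - A i j * A j i with hd
  rw [Fintype.linearIndependent_iff]
  constructor
  · intro H hd0
    obtain ⟨v, hv, hMv⟩ := Matrix.exists_mulVec_eq_zero_iff.mpr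
      (show (Matrix.of ![![A i i, A i j], ![A j i, A j j]]).det = 0 by
        rw [Matrix.det_fin_two]; simpa using hd0)
    have hv0 : A i i * v 0 + A i j * v 1 = 0 := by
      have := congrFun hMv 0
      simpa [Matrix.mulVec, dotProduct, Fin.sum_univ_two] using this
    have hv1 : A j i * v 0 + A j j * v 1 = 0 := by
      have := congrFun hMv 1
      simpa [Matrix.mulVec, dotProduct, Fin.sum_univ_two] using this
    set g : n → ZMod 2 := fun k => if k = i then v 0 else if k = j then v 1
      else v 0 * A k i + v 1 * A k j with hg
    have hgi : g i = v 0 := by simp [hg]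
    have hgj : g j = v 1 := by simp [hg, if_neg (Ne.symm hij)]
    have hsum : ∑ k, g k • vOff A i j k = 0 := by
      funext w
      rw [vOff_key A hij, hgi, hgj]
      simp only [Pi.zero_apply]
      by_cases hwi : w = i
      · subst hwi
        rw [if_pos rfl]
        linear_combination hv0
      · by_cases hwj : w = j
        · subst hwj
          rw [if_neg hwi, if_pos rfl]
          linear_combination hv1
        · rw [if_neg hwi, if_neg hwj,
            show g w = v 0 * A w i + v 1 * A w j by simp [hg, hwi, hwj]]
          linear_combination zmod2_add_self (v 0 * A w i + v 1 * A w j)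
    have hvne : v 0 ≠ 0 ∨ v 1 ≠ 0 := by
      by_contra hc
      push_neg at hc
      apply hv
      funext m
      fin_cases m <;> simp [hc.1, hc.2]
    rcases hvne with h0 | h0
    · exact h0 (hgi ▸ H g hsum i)
    · exact h0 (hgj ▸ H g hsum j)
  · intro hd0 g hgsum
    have ei : g i * A i i + g j * A i j = 0 := by
      have := congrFun hgsum i
      rw [vOff_key A hij] at this
      simpa using this
    have ej : g i * A j i + g j * A j j = 0 := by
      have := congrFun hgsum j
      rw [vOff_key A hij] at this
      simpa [hij.symm] using this
    have hgi : g i = 0 := by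
      have : g i * d = 0 := by
        rw [hd]; linear_combination A j j * ei - A i j * ej
      rcases mul_eq_zero.mp this with h | h
      · exact h
      · exact absurd h hd0
    have hgj : g j = 0 := by
      have : g j * d = 0 := by
        rw [hd]; linear_combination A i i * ej - A j i * ei
      rcases mul_eq_zero.mp this with h | h
      · exact h
      · exact absurd h hd0
    intro k
    by_cases hki : k = i
    · exact hki ▸ hgi
    · by_cases hkj : k = j
      · exact hkj ▸ hgj
      · have := congrFun hgsum k
        rw [vOff_key A hij] at this
        simpa [hki, hkj, hgi, hgj] using this

/-- The subtransversal detecting the diagonal entry `A i i`. -/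
def S1 (i : n) : Set (n ⊕ n) := insert (Sum.inr i) (Sum.inl '' {j | j ≠ i})

def e1 (i : n) : n ≃ ↥(S1 (n := n) i) where
  toFun j := if h : j = i then ⟨Sum.inr i, Set.mem_insert _ _⟩
    else ⟨Sum.inl j, Set.mem_insert_iff.mpr (Or.inr ⟨j, h, rfl⟩)⟩
  invFun s := Sum.elim id id s.1
  left_inv j := by by_cases h : j = i <;> simp [h]
  right_inv s := by
    obtain ⟨x, hx⟩ := s
    rcases Set.mem_insert_iff.mp hx with rfl | ⟨j, hj, rfl⟩
    · simp
    · have hj' : j ≠ i := hj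
      simp [hj']

omit [Fintype n] in
lemma S1_injOn (i : n) : Set.InjOn (Sum.elim id id) (S1 (n := n) i) := by
  intro x hx y hy hxy
  rcases Set.mem_insert_iff.mp hx with rfl | ⟨a, ha, rfl⟩ <;>
    rcases Set.mem_insert_iff.mp hy with rfl | ⟨b, hb, rfl⟩ <;>
      simp_all

lemma iaIndep_S1 (A : Matrix n n (ZMod 2)) (i : n) :
    iaIndep A (S1 i) ↔ A i i ≠ 0 := by
  rw [← li_vDiag A i]
  have hcomp : (S1 (n := n) i).restrict (iaCol A) ∘ (e1 i) = vDiag A i := by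
    funext j
    by_cases h : j = i <;> simp [e1, h, Set.restrict, iaCol, vDiag]
  exact Iff.trans (linearIndependent_equiv (e1 i)).symm (by rw [hcomp])

/-- The subtransversal detecting the `2×2` principal minor at `i, j`. -/
def S2 (i j : n) : Set (n ⊕ n) :=
  insert (Sum.inr i) (insert (Sum.inr j) (Sum.inl '' {k | k ≠ i ∧ k ≠ j}))

def e2 {i j : n} (hij : i ≠ j) : n ≃ ↥(S2 (n := n) i j) where
  toFun k := if h : k = i then ⟨Sum.inr i, Set.mem_insert _ _⟩
    else if h' : k = j then
      ⟨Sum.inr j, Set.mem_insert_iff.mpr (Or.inr (Set.mem_insert _ _))⟩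
    else ⟨Sum.inl k, Set.mem_insert_iff.mpr (Or.inr (Set.mem_insert_iff.mpr
      (Or.inr ⟨k, ⟨h, h'⟩, rfl⟩)))⟩
  invFun s := Sum.elim id id s.1
  left_inv k := by
    by_cases h : k = i
    · simp [h]
    · by_cases h' : k = j <;> simp [h, h', Ne.symm hij]
  right_inv s := by
    obtain ⟨x, hx⟩ := s
    rcases Set.mem_insert_iff.mp hx with rfl | hx'
    · simp
    rcases Set.mem_insert_iff.mp hx' with rfl | ⟨k, ⟨hk1, hk2⟩, rfl⟩
    · simp [Ne.symm hij]
    · have hk1' : k ≠ i := hk1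
      have hk2' : k ≠ j := hk2
      simp [hk1', hk2']

omit [Fintype n] in
lemma S2_injOn {i j : n} (hij : i ≠ j) :
    Set.InjOn (Sum.elim id id) (S2 (n := n) i j) := by
  intro x hx y hy hxy
  rcases Set.mem_insert_iff.mp hx with rfl | hx' <;>
    [skip; rcases Set.mem_insert_iff.mp hx' with rfl | ⟨a, ⟨ha1, ha2⟩, rfl⟩] <;>
    (rcases Set.mem_insert_iff.mp hy with rfl | hy' <;>
      [skip; rcases Set.mem_insert_iff.mp hy' with rfl | ⟨b, ⟨hb1, hb2⟩, rfl⟩]) <;>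
    simp_all

lemma iaIndep_S2 (A : Matrix n n (ZMod 2)) {i j : n} (hij : i ≠ j) :
    iaIndep A (S2 i j) ↔ A i i * A j j - A i j * A j i ≠ 0 := by
  rw [← li_vOff A hij]
  have hcomp : (S2 (n := n) i j).restrict (iaCol A) ∘ (e2 hij) = vOff A i j := by
    funext k
    by_cases h : k = i
    · simp [e2, h, Set.restrict, iaCol, vOff]
    · by_cases h' : k = j <;> simp [e2, h, h', Ne.symm hij, Set.restrict, iaCol, vOff]
  exact Iff.trans (linearIndependent_equiv (e2 hij)).symm (by rw [hcomp])

end ShelterAux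

open ShelterAux in
/-- Suppose symmetric GF(2) matrices `A` and `A'` give 2-sheltering matroids via the
representations `(I | A)` and `(I | A')` with the same natural 2-partition, and the
associated multimatroids coincide (the same subtransversals are independent, where a
subtransversal is a set on which the block map `Sum.elim id id` is injective).
Then `A = A'`. -/
theorem strongly_binary_unique_sheltering {n : Type} [Fintype n] [DecidableEq n]
    (A A' : Matrix n n (ZMod 2)) (hA : A.IsSymm) (hA' : A'.IsSymm)
    (h : ∀ S : Set (n ⊕ n), Set.InjOn (Sum.elim id id) S →
      (iaIndep A S ↔ iaIndep A' S)) :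
    A = A' := by
  have hdiag : ∀ i, A i i = A' i i := by
    intro i
    have h1 := h (S1 i) (S1_injOn i)
    rw [iaIndep_S1, iaIndep_S1] at h1
    exact (by decide : ∀ a b : ZMod 2, (a ≠ 0 ↔ b ≠ 0) → a = b) _ _ h1
  ext i j
  by_cases hij : i = j
  · exact hij ▸ hdiag i
  · have h2 := h (S2 i j) (S2_injOn hij)
    rw [iaIndep_S2 A hij, iaIndep_S2 A' hij] at h2
    rw [hA.apply i j, hA'.apply i j, hdiag i, hdiag j] at h2
    exact (by decide : ∀ c d x y : ZMod 2,
      ((c * d - x * x ≠ 0) ↔ (c * d - y * y ≠ 0)) → x = y) _ _ _ _ h2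
end

section
/- Let G be a looped simple graph with a vertex v, and let G_ℓ^v be the graph obtained from G by complementing the loop status of v. Then the bijection of W(G) that swaps χ(v) ↔ ψ(v) and fixes all other elements is an isomorphism of isotropic matroids M[IAS(G)] → M[IAS(G_ℓ^v)]. -/
/-- Loop complementation at `v` induces an isomorphism of isotropic matroids
`M[IAS(G)] → M[IAS(G_ℓ^v)]`, given by the bijection of `W(G)` swapping
`χ(v) ↔ ψ(v)` and fixing all other elements. -/
theorem loop_complement_isotropic_iso {V : Type} [Fintype V] [DecidableEq V]
    (A : Matrix V V (ZMod 2)) (hA : A.IsSymm) (v : V)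
    (A' : Matrix V V (ZMod 2))
    (hA' : A' = fun w x => A w x + (if w = v ∧ x = v then 1 else 0)) :
    ∀ S : Set (V ⊕ V ⊕ V),
      iasIndep A S ↔
      iasIndep A' ((Equiv.swap (Sum.inr (Sum.inl v) : V ⊕ V ⊕ V) (Sum.inr (Sum.inr v))) '' S) := by
  intro S
  set e : (V ⊕ V ⊕ V) ≃ (V ⊕ V ⊕ V) :=
    Equiv.swap (Sum.inr (Sum.inl v)) (Sum.inr (Sum.inr v)) with he
  have key : ∀ x, iasCol A' (e x) = iasCol A x := by
    intro x
    have hcol : ∀ u w, A' w u = A w u + (if w = v ∧ u = v then 1 else 0) := by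
      intro u w; rw [hA']
    rcases x with w | w | w
    · have : e (Sum.inl w) = Sum.inl w := by
        rw [he]; apply Equiv.swap_apply_of_ne_of_ne <;> simp
      rw [this]
      rfl
    · by_cases hw : w = v
      · subst hw
        have : e (Sum.inr (Sum.inl w)) = Sum.inr (Sum.inr w) := by
          rw [he, Equiv.swap_apply_left]
        rw [this]
        funext u
        simp only [iasCol, hcol]
        by_cases hu : u = w <;> simp [hu] <;> ring_nf <;> rw [show (2:ZMod 2) = 0 from rfl, zero_add]
      · have : e (Sum.inr (Sum.inl w)) = Sum.inr (Sum.inl w) := by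
          rw [he]; apply Equiv.swap_apply_of_ne_of_ne <;> simp [hw]
        rw [this]
        funext u
        simp [iasCol, hcol, hw]
    · by_cases hw : w = v
      · subst hw
        have : e (Sum.inr (Sum.inr w)) = Sum.inr (Sum.inl w) := by
          rw [he, Equiv.swap_apply_right]
        rw [this]
        funext u
        simp only [iasCol, hcol]
        by_cases hu : u = w <;> simp [hu] <;> ring_nf <;> rw [show (2:ZMod 2) = 0 from rfl, zero_add]
      · have : e (Sum.inr (Sum.inr w)) = Sum.inr (Sum.inr w) := by
          rw [he]; apply Equiv.swap_apply_of_ne_of_ne <;> simp [hw]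
        rw [this]
        funext u
        simp [iasCol, hcol, hw]
  have hcomp :
      ((e '' S).restrict (iasCol A')) ∘ (Equiv.Set.image e S e.injective) =
        S.restrict (iasCol A) := by
    funext x
    exact key x
  unfold iasIndep
  rw [← linearIndependent_equiv (Equiv.Set.image e S e.injective)
      (f := (e '' S).restrict (iasCol A')), hcomp]
end

section
/- Let G be a looped simple graph with an unlooped vertex v, and let G_ns^v be the non-simple local complement of G at v (complement adjacency between every pair of distinct neighbors of v and complement the loop status of every neighbor of v). Then the bijection of ground sets that swaps φ(v) ↔ ψ(v) and otherwise sends φ(w) ↦ φ(w), χ(w) ↦ χ(w), ψ(w) ↦ ψ(w) is an isomorphism of binary matroids M[IAS(G)] → M[IAS(G_ns^v)]. -/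
/-- The row-operation map: add row `v` to every row `w` with `A w v = 1`. -/
def rowOp {V : Type} (A : Matrix V V (ZMod 2)) (v : V) :
    (V → ZMod 2) →ₗ[ZMod 2] (V → ZMod 2) where
  toFun c := fun w => c w + A w v * c v
  map_add' c d := by funext w; simp [Pi.add_apply]; ring
  map_smul' r c := by funext w; simp [Pi.smul_apply, smul_eq_mul]; ring

lemma two_zero : (2 : ZMod 2) = 0 := rfl

lemma rowOp_invol {V : Type} (A : Matrix V V (ZMod 2)) (v : V) (hv : A v v = 0) :
    Function.Involutive (rowOp A v) := by
  intro c
  funext w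
  simp only [rowOp, LinearMap.coe_mk, AddHom.coe_mk, hv]
  ring_nf
  simp [two_zero]

lemma rowOp_col {V : Type} [DecidableEq V] (A : Matrix V V (ZMod 2)) (hA : A.IsSymm)
    (v : V) (hv : A v v = 0) (A' : Matrix V V (ZMod 2))
    (hA' : A' = fun w x => A w x + A w v * A x v) (s : V ⊕ V ⊕ V) :
    rowOp A v (iasCol A s) =
      iasCol A' ((Equiv.swap (Sum.inl v : V ⊕ V ⊕ V) (Sum.inr (Sum.inr v))) s) := by
  have hsym : ∀ w x, A w x = A x w := fun w x => by simpa using congrFun (congrFun hA x) w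
  rcases s with w | w | w
  · by_cases hw : w = v
    · subst hw
      rw [Equiv.swap_apply_left]
      funext u
      simp only [rowOp, iasCol, LinearMap.coe_mk, AddHom.coe_mk, hA', hv]
      simp [add_comm]
    · rw [Equiv.swap_apply_of_ne_of_ne (by simpa using hw) (by simp)]
      funext u
      simp only [rowOp, iasCol, LinearMap.coe_mk, AddHom.coe_mk]
      simp [Ne.symm hw]
  · rw [Equiv.swap_apply_of_ne_of_ne (by simp) (by simp)]
    funext u
    simp only [rowOp, iasCol, LinearMap.coe_mk, AddHom.coe_mk, hA']
    rw [hsym v w]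
  · by_cases hw : w = v
    · subst hw
      rw [Equiv.swap_apply_right]
      funext u
      simp only [rowOp, iasCol, LinearMap.coe_mk, AddHom.coe_mk, hv]
      ring_nf
      simp [two_zero, CharTwo.add_self_eq_zero]
    · rw [Equiv.swap_apply_of_ne_of_ne (by simp) (by simpa using hw)]
      funext u
      simp only [rowOp, iasCol, LinearMap.coe_mk, AddHom.coe_mk, hA']
      simp [Ne.symm hw, hsym v w]
      ring

/-- Non-simple local complementation at an unlooped vertex `v` (whose adjacency matrix
is `A' = A + a aᵀ`, `a` the `v` column of `A`) induces an isomorphism of binary matroids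
`M[IAS(G)] → M[IAS(G_ns^v)]`, given by the bijection swapping `φ(v) ↔ ψ(v)` and fixing
all other elements of the ground set. -/
theorem nonsimple_local_complement_isotropic_iso {V : Type} [Fintype V] [DecidableEq V]
    (A : Matrix V V (ZMod 2)) (hA : A.IsSymm) (v : V) (hv : A v v = 0)
    (A' : Matrix V V (ZMod 2))
    (hA' : A' = fun w x => A w x + A w v * A x v) :
    ∀ S : Set (V ⊕ V ⊕ V),
      iasIndep A S ↔
      iasIndep A' ((Equiv.swap (Sum.inl v : V ⊕ V ⊕ V) (Sum.inr (Sum.inr v))) '' S) := by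
  intro S
  set σ := Equiv.swap (Sum.inl v : V ⊕ V ⊕ V) (Sum.inr (Sum.inr v)) with hσ
  have hker : LinearMap.ker (rowOp A v) = ⊥ :=
    LinearMap.ker_eq_bot.mpr (rowOp_invol A v hv).injective
  have h1 : iasIndep A S ↔
      LinearIndependent (ZMod 2) ((rowOp A v) ∘ S.restrict (iasCol A)) :=
    (LinearMap.linearIndependent_iff (rowOp A v) hker).symm
  have h2 : iasIndep A' (σ '' S) ↔
      LinearIndependent (ZMod 2) (((σ '' S).restrict (iasCol A')) ∘ (σ.image S)) :=
    (linearIndependent_equiv (σ.image S)).symm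
  rw [h1, h2]
  have heq : ((σ '' S).restrict (iasCol A')) ∘ (σ.image S)
      = (rowOp A v) ∘ S.restrict (iasCol A) := by
    funext x
    simp only [Function.comp_apply, Set.restrict_apply, Equiv.image]
    exact (rowOp_col A hA v hv A' hA' x).symm
  rw [heq]
end

section
/- Let G be a looped simple graph, T a transversal of the vertex triples, X ⊆ V(G) a stable set of G, and suppose T = {φ(v) : v ∉ X} ∪ {χ(x) : x ∈ X unlooped} ∪ {ψ(x) : x ∈ X looped}. Then the nullity of T in M[IAS(G)] (i.e., |T| minus the GF(2)-rank of the corresponding column set of IAS(G)) equals |X|. -/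
lemma mem_span_singles {V : Type} [Fintype V] [DecidableEq V] (X : Set V)
    (f : V → ZMod 2) (hf : ∀ w ∈ X, f w = 0) :
    f ∈ Submodule.span (ZMod 2) ((fun v => (Pi.single v 1 : V → ZMod 2)) '' Xᶜ) := by
  classical
  have hrep : f = ∑ i, f i • (Pi.single i 1 : V → ZMod 2) := by
    funext j
    simp [Finset.sum_apply, Pi.single_apply]
  rw [hrep]
  apply Submodule.sum_mem
  intro i _
  by_cases hi : i ∈ X
  · simp [hf i hi]
  · exact Submodule.smul_mem _ _ (Submodule.subset_span ⟨i, hi, rfl⟩)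

lemma rank_singles {V : Type} [Fintype V] [DecidableEq V] (X : Set V) :
    Module.finrank (ZMod 2)
      (Submodule.span (ZMod 2) ((fun v => (Pi.single v 1 : V → ZMod 2)) '' Xᶜ)) =
      Xᶜ.ncard := by
  classical
  haveI : Fintype ↥(Xᶜ) := (Set.toFinite Xᶜ).fintype
  rw [Set.image_eq_range]
  have hli : LinearIndependent (ZMod 2)
      (fun v : ↥(Xᶜ) => (Pi.single (v : V) 1 : V → ZMod 2)) := by
    have hb := (Pi.basisFun (ZMod 2) V).linearIndependent
    have : (fun v : ↥(Xᶜ) => (Pi.single (v : V) 1 : V → ZMod 2)) =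
        (Pi.basisFun (ZMod 2) V) ∘ (Subtype.val : ↥(Xᶜ) → V) := by
      funext v; simp [Pi.basisFun_apply]
    rw [this]
    exact hb.comp _ Subtype.val_injective
  rw [finrank_span_eq_card hli]
  rw [← Nat.card_coe_set_eq, Nat.card_eq_fintype_card]

/-- Let `X` be a stable set of a looped simple graph `G` and let
`T = {φ(v) : v ∉ X} ∪ {χ(x) : x ∈ X unlooped} ∪ {ψ(x) : x ∈ X looped}` be the associated
transversal of the vertex triples.  Then the nullity of `T` in `M[IAS(G)]`, i.e. `|T|`
minus the GF(2)-rank of the corresponding set of columns of `IAS(G)`, equals `|X|`. -/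
theorem stable_set_transversal_nullity {V : Type} [Fintype V] [DecidableEq V]
    (A : Matrix V V (ZMod 2)) (hA : A.IsSymm)
    (X : Set V) (hstable : ∀ x ∈ X, ∀ y ∈ X, x ≠ y → A x y = 0)
    (T : Set (V ⊕ V ⊕ V))
    (hT : T = (fun v : V => (Sum.inl v : V ⊕ V ⊕ V)) '' Xᶜ ∪
              (fun v : V => (Sum.inr (Sum.inl v) : V ⊕ V ⊕ V)) '' {x ∈ X | A x x = 0} ∪
              (fun v : V => (Sum.inr (Sum.inr v) : V ⊕ V ⊕ V)) '' {x ∈ X | A x x = 1}) :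
    T.ncard =
      Module.finrank (ZMod 2) (Submodule.span (ZMod 2) (iasCol A '' T)) + X.ncard := by
  classical
  have hcol : ∀ v : V, iasCol A (Sum.inl v) = (Pi.single v 1 : V → ZMod 2) := by
    intro v; funext w; simp [iasCol, Pi.single_apply]
  -- span equality
  have hspan : Submodule.span (ZMod 2) (iasCol A '' T) =
      Submodule.span (ZMod 2) ((fun v => (Pi.single v 1 : V → ZMod 2)) '' Xᶜ) := by
    apply le_antisymm
    · rw [Submodule.span_le]
      rintro c ⟨t, ht, rfl⟩
      rw [hT] at ht
      rcases ht with (⟨v, hv, rfl⟩ | ⟨x, ⟨hx, hxx⟩, rfl⟩) | ⟨x, ⟨hx, hxx⟩, rfl⟩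
      · rw [hcol]
        exact Submodule.subset_span ⟨v, hv, rfl⟩
      · apply mem_span_singles
        intro w hw
        by_cases hwx : w = x
        · subst hwx; simpa [iasCol] using hxx
        · simpa [iasCol] using hstable w hw x hx hwx
      · apply mem_span_singles
        intro w hw
        by_cases hwx : w = x
        · subst hwx; simp [iasCol, hxx]; decide
        · simp [iasCol, hwx, hstable w hw x hx hwx]
    · rw [Submodule.span_le]
      rintro c ⟨v, hv, rfl⟩
      exact Submodule.subset_span ⟨Sum.inl v, by rw [hT]; exact Or.inl (Or.inl ⟨v, hv, rfl⟩), hcol v⟩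
  rw [hspan, rank_singles]
  -- cardinality of T
  have hX : {x ∈ X | A x x = 0} ∪ {x ∈ X | A x x = 1} = X := by
    ext x
    constructor
    · rintro (⟨h, _⟩ | ⟨h, _⟩) <;> exact h
    · intro hx
      rcases (show ∀ a : ZMod 2, a = 0 ∨ a = 1 by decide) (A x x) with h | h
      · exact Or.inl ⟨hx, h⟩
      · exact Or.inr ⟨hx, h⟩
  have hXd : Disjoint {x ∈ X | A x x = 0} {x ∈ X | A x x = 1} := by
    rw [Set.disjoint_left]
    rintro x ⟨_, h0⟩ ⟨_, h1⟩
    rw [h0] at h1; exact absurd h1 (by decide)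
  have hXcard : {x ∈ X | A x x = 0}.ncard + {x ∈ X | A x x = 1}.ncard = X.ncard := by
    rw [← Set.ncard_union_eq hXd (Set.toFinite _) (Set.toFinite _), hX]
  have hTcard : T.ncard = Xᶜ.ncard + X.ncard := by
    rw [hT]
    rw [Set.ncard_union_eq ?d1 (Set.toFinite _) (Set.toFinite _),
        Set.ncard_union_eq ?d2 (Set.toFinite _) (Set.toFinite _)]
    · have i1 : Function.Injective (fun v : V => (Sum.inl v : V ⊕ V ⊕ V)) := by
        intro a b h; simpa using h
      have i2 : Function.Injective (fun v : V => (Sum.inr (Sum.inl v) : V ⊕ V ⊕ V)) := by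
        intro a b h; simpa using h
      have i3 : Function.Injective (fun v : V => (Sum.inr (Sum.inr v) : V ⊕ V ⊕ V)) := by
        intro a b h; simpa using h
      rw [Set.ncard_image_of_injective _ i1, Set.ncard_image_of_injective _ i2,
        Set.ncard_image_of_injective _ i3]
      omega
    case d1 =>
      rw [Set.disjoint_left]
      rintro t (⟨v, _, rfl⟩ | ⟨v, _, rfl⟩) ⟨w, _, h⟩ <;> simp at h
    case d2 =>
      rw [Set.disjoint_left]
      rintro t ⟨v, _, rfl⟩ ⟨w, _, h⟩; simp at h
  rw [hTcard]
end
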